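/- Let b, Δ, Δ̄ ∈ ℂ with b ≠ 0, and let g be a nonzero homogeneous polynomial of total degree 1 in two variables over ℂ. Then −(bλ+μ)·g(∂,λ+μ) = (∂+Δ̄λ)·g(∂+λ,μ) − (∂+μ+Δλ)·g(∂,μ) holds for all ∂, λ, μ ∈ ℂ if and only if Δ − Δ̄ = 1 + b and there exists a nonzero c ∈ ℂ with g(∂,λ) = c·(∂ − (Δ̄/b)·λ). -/

import Mathlib

/-- Evaluation of a two-variable polynomial at a pair of complex numbers. -/
noncomputable def ev2 (p : MvPolynomial (Fin 2) ℂ) (x y : ℂ) : ℂ :=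
  MvPolynomial.eval ![x, y] p

lemma hom1_struct (g : MvPolynomial (Fin 2) ℂ) (h : g.IsHomogeneous 1) :
    g = MvPolynomial.C (g.coeff (Finsupp.single 0 1)) * MvPolynomial.X 0
      + MvPolynomial.C (g.coeff (Finsupp.single 1 1)) * MvPolynomial.X 1 := by
  ext m
  rw [MvPolynomial.coeff_add, MvPolynomial.coeff_C_mul, MvPolynomial.coeff_C_mul,
    MvPolynomial.coeff_X', MvPolynomial.coeff_X']
  by_cases h0 : (Finsupp.single (0 : Fin 2) 1) = m
  · subst h0
    rw [if_pos rfl, if_neg (by simp [Finsupp.ext_iff, Fin.forall_fin_two])]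
    ring
  by_cases h1 : (Finsupp.single (1 : Fin 2) 1) = m
  · subst h1
    rw [if_pos rfl, if_neg h0]
    ring
  rw [if_neg h0, if_neg h1]
  by_cases hd : m.degree = 1
  · exfalso
    have hdeg : m 0 + m 1 = 1 := by
      rw [Finsupp.degree] at hd
      rw [← Fin.sum_univ_two m, ← Finset.sum_subset (Finset.subset_univ m.support)
        (fun i _ hi => Finsupp.notMem_support_iff.mp hi)]
      exact hd
    rcases Nat.add_eq_one_iff.mp hdeg with ⟨h0', h1'⟩ | ⟨h0', h1'⟩
    · exact h1 (Finsupp.ext (by intro i; fin_cases i <;> simp [h0', h1'])).symm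
    · exact h0 (Finsupp.ext (by intro i; fin_cases i <;> simp [h0', h1'])).symm
  · rw [h.coeff_eq_zero hd]; ring

/-- Degree `m = 1` case: a nonzero homogeneous polynomial `g` of total degree `1` satisfies
the H-cocycle equation (F) for `W(b)`, `b ≠ 0`, if and only if `Δ − Δ̄ = 1 + b` and
`g(∂,λ) = c·(∂ − (Δ̄/b)·λ)` for some nonzero constant `c`. Here `Δ'` stands for `Δ̄`. -/
theorem stmt_13 (b Δ Δ' : ℂ) (hb : b ≠ 0) (g : MvPolynomial (Fin 2) ℂ) (hg0 : g ≠ 0)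
    (hhom : g.IsHomogeneous 1) :
    (∀ pa lam mu : ℂ,
      -(b * lam + mu) * ev2 g pa (lam + mu)
        = (pa + Δ' * lam) * ev2 g (pa + lam) mu - (pa + mu + Δ * lam) * ev2 g pa mu) ↔
    (Δ - Δ' = 1 + b ∧ ∃ c : ℂ, c ≠ 0 ∧
      ∀ pa lam : ℂ, ev2 g pa lam = c * (pa - Δ' / b * lam)) := by
  set a := g.coeff (Finsupp.single 0 1) with ha
  set d := g.coeff (Finsupp.single 1 1) with hd
  have key : ∀ x y : ℂ, ev2 g x y = a * x + d * y := by
    intro x y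
    conv_lhs => rw [ev2, hom1_struct g hhom]
    simp
    rfl
  have hnz : ¬(a = 0 ∧ d = 0) := by
    rintro ⟨h1, h2⟩
    apply hg0
    rw [hom1_struct g hhom, ← ha, ← hd, h1, h2]
    simp
  constructor
  · intro H
    have e1 : -(b * d) = Δ' * a := by
      have := H 0 1 0
      simp only [key] at this
      linear_combination this
    have e2 : a * (Δ - Δ' - 1 - b) = 0 := by
      have := H 1 1 0
      simp only [key] at this
      linear_combination this - e1
    have e3 : d * (Δ - Δ' - 1 - b) = 0 := by
      have := H 0 1 1
      simp only [key] at this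
      linear_combination this - e1
    have hane : a ≠ 0 := by
      intro ha0
      have hd0 : d ≠ 0 := fun hd0 => hnz ⟨ha0, hd0⟩
      have : b * d = 0 := by linear_combination -e1 - Δ' * ha0
      rcases mul_eq_zero.mp this with h | h
      · exact hb h
      · exact hd0 h
    have hΔ : Δ - Δ' = 1 + b := by
      rcases mul_eq_zero.mp e2 with h | h
      · exact absurd h hane
      · linear_combination h
    refine ⟨hΔ, a, hane, fun pa lam => ?_⟩
    rw [key]
    have hdval : d = -(Δ' * a) / b := by field_simp; linear_combination -e1
    rw [hdval]
    field_simp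
    ring
  · rintro ⟨hΔ, c, hc, hg⟩
    intro pa lam mu
    have hΔ' : Δ = Δ' + 1 + b := by linear_combination hΔ
    rw [hg, hg, hg, hΔ']
    field_simp
    ring
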